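/- Let G=(V,E) be a finite connected graph with m edges, let w_{0,e}>0 be initial weights, fix θ>1 and a step size s with 0<s<1/2. Define iterates by w_e^{(0)}=w_{0,e} and w_e^{(j+1)} = w_e^{(j)} − s·κ_e^{(j)}·w_e^{(j)}, where κ_e^{(j)} is Lin–Lu–Yau's Ricci curvature of the edge e computed from the weights w^{(j)} (the defining limits are assumed to exist at every step, and the curvature satisfies −(2/ρ_e)·max_{τ∈E} w_τ ≤ κ_e ≤ 2), and assume that at every step j and every edge e the θ-surgery condition w_e^{(j)}/ρ_e^{(j)} ≤ θ holds, where ρ_e^{(j)} is the distance of the endpoints of e in the weights w^{(j)}. Then every iterate is strictly positive (so the flow has a unique global solution) and for all j∈ℕ and all e∈E: (1−2s)^j·w_{0,e} ≤ w_e^{(j)} ≤ (1+2mθs)^j·∑_{τ∈E} w_{0,τ}. -/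
import Mathlib


open Finset

section RicciDefs

variable {V : Type*}

/-- The sum of the weights of the edges of a walk. -/
noncomputable def walkWeight {G : SimpleGraph V} (w : Sym2 V → ℝ) {u v : V} (p : G.Walk u v) : ℝ :=
  (p.edges.map w).sum

/-- The weighted graph distance: infimum of total weight over walks joining `u` and `v`. -/
noncomputable def gdist (G : SimpleGraph V) (w : Sym2 V → ℝ) (u v : V) : ℝ :=
  sInf {x : ℝ | ∃ p : G.Walk u v, x = walkWeight w p}

/-- A choice of ordered endpoints of an unordered pair. -/
noncomputable def endpoints (e : Sym2 V) : V × V := Quot.out e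

/-- The weighted distance between the endpoints of an edge. -/
noncomputable def edist (G : SimpleGraph V) (w : Sym2 V → ℝ) (e : Sym2 V) : ℝ :=
  gdist G w (endpoints e).1 (endpoints e).2

/-- The `α`-lazy one-step random walk at `x`. -/
noncomputable def lazyWalk (G : SimpleGraph V) [Fintype V] [DecidableEq V] [DecidableRel G.Adj]
    (w : Sym2 V → ℝ) (α : ℝ) (x : V) : V → ℝ := fun z =>
  if z = x then α
  else if G.Adj x z then (1 - α) * w s(x, z) / ∑ u ∈ G.neighborFinset x, w s(x, u)
  else 0

/-- A probability measure on a finite vertex set. -/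
def IsProbMeasure [Fintype V] (μ : V → ℝ) : Prop :=
  (∀ x, 0 ≤ μ x) ∧ ∑ x, μ x = 1

/-- A coupling between two probability measures. -/
def IsCoupling [Fintype V] (μ₁ μ₂ : V → ℝ) (A : V → V → ℝ) : Prop :=
  (∀ u v, A u v ∈ Set.Icc (0 : ℝ) 1) ∧ (∀ u, ∑ x, A u x = μ₁ u) ∧ (∀ v, ∑ y, A y v = μ₂ v)

/-- The Wasserstein distance between two probability measures. -/
noncomputable def wasserstein [Fintype V] (G : SimpleGraph V) (w : Sym2 V → ℝ)
    (μ₁ μ₂ : V → ℝ) : ℝ :=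
  sInf {x : ℝ | ∃ A : V → V → ℝ, IsCoupling μ₁ μ₂ A ∧ x = ∑ u, ∑ v, A u v * gdist G w u v}

/-- Ollivier's `α`-Ricci curvature of an edge. -/
noncomputable def ollivier [Fintype V] [DecidableEq V] (G : SimpleGraph V) [DecidableRel G.Adj]
    (w : Sym2 V → ℝ) (α : ℝ) (e : Sym2 V) : ℝ :=
  1 - wasserstein G w (lazyWalk G w α (endpoints e).1) (lazyWalk G w α (endpoints e).2)
        / edist G w e

end RicciDefs
/-- Theorem 2.3 (ii): bounds for the discrete Ricci curvature flow
`w' = w − s·κ·w` with Lin–Lu–Yau's curvature, under the θ-surgery condition. -/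
theorem lly_flow_surgery_bounds {V : Type*} [Fintype V] [DecidableEq V]
    (G : SimpleGraph V) [DecidableRel G.Adj] (hconn : G.Connected)
    (m : ℕ) (hm : G.edgeFinset.card = m)
    (θ : ℝ) (hθ : 1 < θ)
    (s : ℝ) (hs0 : 0 < s) (hs1 : s < 1 / 2)
    (w : ℕ → Sym2 V → ℝ) (κ : ℕ → Sym2 V → ℝ)
    (hpos0 : ∀ e ∈ G.edgeFinset, 0 < w 0 e)
    -- the Lin–Lu–Yau curvature κ is the limit of κ^α/(1-α) as α → 1⁻, assumed to exist
    (hLLY : ∀ j : ℕ, ∀ e ∈ G.edgeFinset,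
      Filter.Tendsto (fun α : ℝ => ollivier G (w j) α e / (1 - α))
        (nhdsWithin 1 (Set.Iio 1)) (nhds (κ j e)))
    -- the curvature bounds −(2/ρ_e)·max_{τ∈E} w_τ ≤ κ_e ≤ 2
    (hbound : ∀ (j : ℕ) (e : Sym2 V) (he : e ∈ G.edgeFinset),
      -(2 / edist G (w j) e) * G.edgeFinset.sup' ⟨e, he⟩ (w j) ≤ κ j e ∧ κ j e ≤ 2)
    (hflow : ∀ j : ℕ, ∀ e ∈ G.edgeFinset,
      w (j + 1) e = w j e - s * κ j e * w j e)
    -- θ-surgery condition at every step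
    (hsurg : ∀ j : ℕ, ∀ e ∈ G.edgeFinset, w j e / edist G (w j) e ≤ θ) :
    ∀ j : ℕ, ∀ e ∈ G.edgeFinset,
      0 < w j e ∧
      (1 - 2 * s) ^ j * w 0 e ≤ w j e ∧
      w j e ≤ (1 + 2 * (m : ℝ) * θ * s) ^ j * ∑ τ ∈ G.edgeFinset, w 0 τ := by

  rcases G.edgeFinset.eq_empty_or_nonempty with hE | hne
  · intro j e he; rw [hE] at he; exact absurd he (Finset.notMem_empty e)
  have hC : (0:ℝ) ≤ 2 * (m:ℝ) * θ * s := by positivity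
  have main : ∀ j : ℕ, (∀ e ∈ G.edgeFinset, 0 < w j e ∧ (1 - 2*s)^j * w 0 e ≤ w j e) ∧
      (∑ τ ∈ G.edgeFinset, w j τ) ≤ (1 + 2*(m:ℝ)*θ*s)^j * ∑ τ ∈ G.edgeFinset, w 0 τ := by
    intro j
    induction j with
    | zero => exact ⟨fun e he => ⟨hpos0 e he, by simp⟩, by simp⟩
    | succ j ih =>
      obtain ⟨ih1, ih2⟩ := ih
      set M := G.edgeFinset.sup' hne (w j) with hM
      obtain ⟨e0, he0⟩ := hne
      have hMpos : 0 < M := lt_of_lt_of_le (ih1 e0 he0).1 (Finset.le_sup' (w j) he0)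
      have hMle : M ≤ ∑ τ ∈ G.edgeFinset, w j τ := by
        apply Finset.sup'_le
        intro τ hτ
        exact Finset.single_le_sum (fun i hi => (ih1 i hi).1.le) hτ
      have hpt : ∀ e ∈ G.edgeFinset,
          w (j+1) e ≤ w j e + 2*s*θ*M := by
        intro e he
        have hw := (ih1 e he).1
        have hκ : -(2 / edist G (w j) e) * M ≤ κ j e := (hbound j e he).1
        have hsg : w j e / edist G (w j) e ≤ θ := hsurg j e he
        rw [hflow j e he]
        have hA : -(κ j e) ≤ 2 / edist G (w j) e * M := by nlinarith [hκ]
        have h1 : s * w j e * (-(κ j e)) ≤ s * w j e * (2 / edist G (w j) e * M) :=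
          mul_le_mul_of_nonneg_left hA (by positivity)
        have h2 : s * w j e * (2 / edist G (w j) e * M) = 2*s*M*(w j e / edist G (w j) e) := by
          ring
        have h3 : 2*s*M*(w j e / edist G (w j) e) ≤ 2*s*M*θ :=
          mul_le_mul_of_nonneg_left hsg (by positivity)
        nlinarith [h1, h2, h3]
      constructor
      · intro e he
        have hw := (ih1 e he).1
        have hκ2 : κ j e ≤ 2 := (hbound j e he).2
        have hfac : 1 - 2*s ≤ 1 - s * κ j e := by nlinarith
        have hpos : 0 < w (j+1) e := by
          rw [hflow j e he]
          nlinarith [hw, hκ2, hs0, hs1]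
        refine ⟨hpos, ?_⟩
        have hlow : (1 - 2*s) * w j e ≤ w (j+1) e := by
          rw [hflow j e he]; nlinarith
        calc (1 - 2*s)^(j+1) * w 0 e = (1 - 2*s) * ((1 - 2*s)^j * w 0 e) := by ring
          _ ≤ (1 - 2*s) * w j e := by
              apply mul_le_mul_of_nonneg_left (ih1 e he).2; linarith
          _ ≤ w (j+1) e := hlow
      · have hsum1 : (∑ τ ∈ G.edgeFinset, w (j+1) τ) ≤
            ∑ τ ∈ G.edgeFinset, (w j τ + 2*s*θ*M) :=
          Finset.sum_le_sum fun τ hτ => hpt τ hτ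
        have hsum2 : (∑ τ ∈ G.edgeFinset, (w j τ + 2*s*θ*M)) =
            (∑ τ ∈ G.edgeFinset, w j τ) + (m:ℝ) * (2*s*θ*M) := by
          rw [Finset.sum_add_distrib, Finset.sum_const, hm, nsmul_eq_mul]
        have h4 : (m:ℝ) * (2*s*θ*M) ≤ (m:ℝ) * (2*s*θ) * ∑ τ ∈ G.edgeFinset, w j τ := by
          have : (m:ℝ) * (2*s*θ*M) = ((m:ℝ) * (2*s*θ)) * M := by ring
          rw [this]
          exact mul_le_mul_of_nonneg_left hMle (by positivity)
        have h5 : (∑ τ ∈ G.edgeFinset, w (j+1) τ) ≤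
            (1 + 2*(m:ℝ)*θ*s) * ∑ τ ∈ G.edgeFinset, w j τ := by
          nlinarith [hsum1, hsum2, h4]
        calc (∑ τ ∈ G.edgeFinset, w (j+1) τ)
            ≤ (1 + 2*(m:ℝ)*θ*s) * ∑ τ ∈ G.edgeFinset, w j τ := h5
          _ ≤ (1 + 2*(m:ℝ)*θ*s) * ((1 + 2*(m:ℝ)*θ*s)^j * ∑ τ ∈ G.edgeFinset, w 0 τ) := by
              apply mul_le_mul_of_nonneg_left ih2; linarith
          _ = (1 + 2*(m:ℝ)*θ*s)^(j+1) * ∑ τ ∈ G.edgeFinset, w 0 τ := by ring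
  intro j e he
  obtain ⟨h1, h2⟩ := main j
  refine ⟨(h1 e he).1, (h1 e he).2, ?_⟩
  calc w j e ≤ ∑ τ ∈ G.edgeFinset, w j τ :=
        Finset.single_le_sum (fun i hi => (h1 i hi).1.le) he
    _ ≤ (1 + 2*(m:ℝ)*θ*s)^j * ∑ τ ∈ G.edgeFinset, w 0 τ := h2
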